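/- Let J₂ be a Hölder continuous Jacobian on Ω and let μ₂ be the suitable σ-invariant probability with IRN J₂ (so that L*_{log J₂}(μ₂) = μ₂), and let μ₁ be a suitable probability with continuous IRN J₁. Then D_KL(μ₁,μ₂) − D_KL(L*_{log J₂}(μ₁), μ₂) = 0, where L*_{log J₂}(μ₁) is suitable with IRN z ↦ J₁(σ(z))·J₂(z)/J₂(σ(z)). -/
import Mathlib


open MeasureTheory

/-- The one-sided shift space `Ω = {1,…,d}^ℕ` on `d` symbols,
with the product topology and product σ-algebra. -/
abbrev Omega (d : ℕ) : Type := ℕ → Fin d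

/-- The left shift `σ(x₁,x₂,x₃,…) = (x₂,x₃,…)`. -/
def shift {d : ℕ} (x : Omega d) : Omega d := fun n => x (n + 1)

/-- Prepend a symbol: `cons a x = ax = (a,x₁,x₂,…)`. -/
def cons {d : ℕ} (a : Fin d) (x : Omega d) : Omega d := fun n =>
  match n with
  | 0 => a
  | Nat.succ k => x k

/-- Hölder continuity with respect to the metric
`d(x,y) = 2^{-min{ j : x_j ≠ y_j}}` on `Ω`: there are `C` and `α > 0` such that
whenever `x` and `y` agree on their first `n` coordinates (so `d(x,y) ≤ 2⁻ⁿ`),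
`|f x - f y| ≤ C * (2⁻ⁿ)^α`. -/
def IsHolder {d : ℕ} (f : Omega d → ℝ) : Prop :=
  Continuous f ∧ ∃ C α : ℝ, 0 < α ∧ ∀ (x y : Omega d) (n : ℕ),
    (∀ k < n, x k = y k) → |f x - f y| ≤ C * ((2 : ℝ)⁻¹ ^ n) ^ α

/-- `μ` is a suitable probability with IRN (inverse Radon–Nikodym derivative
along injective branches) `J`: the function `J` is continuous and strictly
positive, and for every symbol `j` and continuous `φ`,
`∫ φ(jx) J(jx) dμ(x) = ∫_{[j]} φ dμ` where `[j] = {x | x₁ = j}`. -/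
structure IsSuitable {d : ℕ} (μ : Measure (Omega d)) (J : Omega d → ℝ) : Prop where
  cont : Continuous J
  pos : ∀ x, 0 < J x
  irn : ∀ (j : Fin d) (φ : Omega d → ℝ), Continuous φ →
    ∫ x, φ (cons j x) * J (cons j x) ∂μ = ∫ x in {x : Omega d | x 0 = j}, φ x ∂μ

/-- `J` is a Jacobian: continuous, strictly positive, and `Σ_a J(ax) = 1`. -/
def IsJacobian {d : ℕ} (J : Omega d → ℝ) : Prop :=
  Continuous J ∧ (∀ x, 0 < J x) ∧ ∀ x : Omega d, ∑ a : Fin d, J (cons a x) = 1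

/-- `ν = L*_{log J}(μ)`, the image of `μ` under the dual of the Ruelle operator
of the potential `log J` (note `e^{log J(ax)} = J(ax)`): for every continuous
`φ`, `∫ φ dν = ∫ L_{log J}φ dμ = ∫ Σ_a J(ax) φ(ax) dμ(x)`. -/
def IsDualRuelle {d : ℕ} (J : Omega d → ℝ) (μ ν : Measure (Omega d)) : Prop :=
  ∀ φ : Omega d → ℝ, Continuous φ →
    ∫ x, φ x ∂ν = ∫ x, ∑ a : Fin d, J (cons a x) * φ (cons a x) ∂μ

/-- `μ` is σ-invariant: `∫ φ∘σ dμ = ∫ φ dμ` for all continuous `φ`. -/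
def IsShiftInvariant {d : ℕ} (μ : Measure (Omega d)) : Prop :=
  ∀ φ : Omega d → ℝ, Continuous φ → ∫ x, φ (shift x) ∂μ = ∫ x, φ x ∂μ

/-- KL divergence `D_KL(μ₁,μ₂) = ∫ (log J₁ − log J₂) dμ₁` of suitable
probabilities, expressed via their IRNs `J₁`, `J₂`. -/
noncomputable def Dkl {d : ℕ} (μ₁ : Measure (Omega d)) (J₁ J₂ : Omega d → ℝ) : ℝ :=
  ∫ x, (Real.log (J₁ x) - Real.log (J₂ x)) ∂μ₁

/-- if `J₂` is a Hölder Jacobian with suitable σ-invariant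
probability `μ₂` (so `L*_{log J₂}μ₂ = μ₂`) and `μ₁` is suitable with
continuous IRN `J₁`, then `D_KL(μ₁,μ₂) − D_KL(L*_{log J₂}μ₁, μ₂) = 0`,
where `L*_{log J₂}μ₁` is suitable with IRN `z ↦ J₁(σz)·J₂(z)/J₂(σz)`. -/
theorem dkl_to_equilibrium_invariant_under_dual_ruelle
    (d : ℕ) (hd : 2 ≤ d) (J₁ J₂ K₁ : Omega d → ℝ)
    (μ₁ μ₂ ν₁ : Measure (Omega d))
    [IsProbabilityMeasure μ₁] [IsProbabilityMeasure μ₂] [IsProbabilityMeasure ν₁]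
    (hJ₂ : IsJacobian J₂) (hJ₂H : IsHolder J₂)
    (h₂ : IsSuitable μ₂ J₂) (hinv₂ : IsShiftInvariant μ₂)
    (hfix : IsDualRuelle J₂ μ₂ μ₂)
    (h₁ : IsSuitable μ₁ J₁)
    (hν₁ : IsDualRuelle J₂ μ₁ ν₁)
    (hK₁ : ∀ z, K₁ z = J₁ (shift z) * J₂ z / J₂ (shift z))
    (hs₁ : IsSuitable ν₁ K₁) :
    Dkl μ₁ J₁ J₂ - Dkl ν₁ K₁ J₂ = 0 := by

  have hcont_shift : Continuous (shift (d := d)) :=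
    continuous_pi fun n => continuous_apply (n + 1)
  set ψ : Omega d → ℝ := fun x => Real.log (J₁ x) - Real.log (J₂ x) with hψ
  have hψcont : Continuous ψ := by
    apply Continuous.sub
    · exact h₁.cont.log (fun x => (h₁.pos x).ne')
    · exact hJ₂.1.log (fun x => (hJ₂.2.1 x).ne')
  have h2 : Dkl ν₁ K₁ J₂ = ∫ x, ψ (shift x) ∂ν₁ := by
    unfold Dkl
    congr 1
    funext z
    have hpos1 := h₁.pos (shift z)
    have hpos2 := hJ₂.2.1 z
    have hpos3 := hJ₂.2.1 (shift z)
    rw [hK₁ z, Real.log_div (by positivity) hpos3.ne',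
      Real.log_mul hpos1.ne' hpos2.ne']
    simp [hψ]
    ring
  have h3 : ∫ x, ψ (shift x) ∂ν₁
      = ∫ x, ∑ a : Fin d, J₂ (cons a x) * ψ (shift (cons a x)) ∂μ₁ :=
    hν₁ (fun x => ψ (shift x)) (hψcont.comp hcont_shift)
  have hsc : ∀ (a : Fin d) (x : Omega d), shift (cons a x) = x := by
    intro a x; funext n; rfl
  have h4 : ∀ x : Omega d,
      ∑ a : Fin d, J₂ (cons a x) * ψ (shift (cons a x)) = ψ x := by
    intro x
    simp only [hsc]
    rw [← Finset.sum_mul, hJ₂.2.2 x, one_mul]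
  rw [h2, h3]
  simp only [h4]
  simp [Dkl, hψ]
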